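/- If K is a triangulated n-sphere admitting a simplicial map of degree 2 to S^n_{n+2}, then K has at least n + 5 vertices. -/

import Mathlib

open Finset

/-- An abstract simplicial complex on vertex type `V`: a collection of nonempty
finite sets of vertices closed under taking nonempty subsets. -/
structure AbsCx (V : Type*) where
  faces : Set (Finset V)
  down_closed : ∀ ⦃s t : Finset V⦄, s ∈ faces → t ⊆ s → t.Nonempty → t ∈ faces
  nonempty_of_mem : ∀ ⦃s⦄, s ∈ faces → s.Nonempty

namespace AbsCx

variable {V W : Type*}

/-- The vertices of a complex. -/
def vertexSet (K : AbsCx V) : Set V := {v | {v} ∈ K.faces}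

/-- The `n`-dimensional faces (given by `n+1` vertices). -/
def facetsOfDim (K : AbsCx V) (n : ℕ) : Set (Finset V) :=
  {s | s ∈ K.faces ∧ s.card = n + 1}

/-- A simplicial map sends faces to faces. -/
def IsSimplicialMap [DecidableEq W] (K : AbsCx V) (L : AbsCx W) (f : V → W) : Prop :=
  ∀ s ∈ K.faces, s.image f ∈ L.faces

/-- Geometric realization of an abstract simplicial complex, as a subspace of `V → ℝ`. -/
def realization (K : AbsCx V) : Set (V → ℝ) :=
  {g | (∀ v, 0 ≤ g v) ∧ ∃ s ∈ K.faces, (∀ v, v ∉ s → g v = 0) ∧ ∑ v ∈ s, g v = 1}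

/-- `K` is a triangulation of the `n`-sphere. -/
def IsSphereTriangulation (n : ℕ) (K : AbsCx V) : Prop :=
  Nonempty (K.realization ≃ₜ Metric.sphere (0 : EuclideanSpace ℝ (Fin (n+1))) 1)

/-- `K` is a triangulation of the closed `n`-disc. -/
def IsDiscTriangulation (n : ℕ) (K : AbsCx V) : Prop :=
  Nonempty (K.realization ≃ₜ Metric.closedBall (0 : EuclideanSpace ℝ (Fin n)) 1)

/-- `K` triangulates a closed (compact, boundaryless = locally Euclidean) topological
`n`-manifold. -/
def IsClosedManifoldTriangulation (n : ℕ) (K : AbsCx V) : Prop :=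
  ∃ (M : Type) (ts : TopologicalSpace M),
    @CompactSpace M ts ∧ Nonempty (@ChartedSpace (EuclideanSpace ℝ (Fin n)) _ M ts) ∧
      Nonempty (@Homeomorph (K.realization) M _ ts)

/-- A coherent orientation of the `n`-dimensional faces of `K`: a sign function on
ordered `(n+1)`-tuples of vertices, alternating under permutations, equal to `±1`
exactly on the orderings of `n`-faces, and such that two facets sharing an
`(n-1)`-face (i.e. orderings differing in exactly one coordinate) get opposite signs. -/
structure CoherentOrientation [DecidableEq V] (n : ℕ) (K : AbsCx V) where
  sign : (Fin (n+1) → V) → ℤ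
  sign_perm : ∀ (x : Fin (n+1) → V) (σ : Equiv.Perm (Fin (n+1))),
    sign (x ∘ σ) = (Equiv.Perm.sign σ : ℤ) * sign x
  sign_unit : ∀ x : Fin (n+1) → V, Function.Injective x →
    Finset.image x Finset.univ ∈ K.faces → sign x = 1 ∨ sign x = -1
  sign_zero : ∀ x : Fin (n+1) → V,
    ¬ Function.Injective x ∨ Finset.image x Finset.univ ∉ K.faces → sign x = 0
  coherent : ∀ x y : Fin (n+1) → V,
    (∃ i, x i ≠ y i ∧ ∀ j, j ≠ i → x j = y j) →
    sign x ≠ 0 → sign y ≠ 0 → sign y = - sign x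

open scoped Classical in
/-- The algebraic number of preimages of the ordered simplex `y` under `f`. -/
noncomputable def algSum [Fintype V] {n : ℕ}
    (sgn : (Fin (n+1) → V) → ℤ) (f : V → W) (y : Fin (n+1) → W) : ℤ :=
  ∑ x : Fin (n+1) → V, if f ∘ x = y then sgn x else 0

/-- `f` has degree `d`: the algebraic number of preimages of every positively
oriented facet of the target equals `d`. -/
def HasDegree [Fintype V] [DecidableEq V] [DecidableEq W] {n : ℕ}
    {K : AbsCx V} {L : AbsCx W}
    (oK : CoherentOrientation n K) (oL : CoherentOrientation n L)
    (f : V → W) (d : ℤ) : Prop :=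
  ∀ y : Fin (n+1) → W, oL.sign y = 1 → algSum oK.sign f y = d

/-- The standard `n`-sphere `S^n_{n+2}`: the boundary complex of the `(n+1)`-simplex,
i.e. all proper nonempty subsets of `n+2` vertices. -/
def stdSphere (n : ℕ) : AbsCx (Fin (n+2)) where
  faces := {s | s.Nonempty ∧ s ≠ Finset.univ}
  down_closed := fun {s t} hs hts ht =>
    ⟨ht, fun h => hs.2 (Finset.univ_subset_iff.mp (h ▸ hts))⟩
  nonempty_of_mem := fun {s} hs => hs.1

/-- Boundary edges of a 2-dimensional complex: edges lying in exactly one triangle. -/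
def boundaryEdges (K : AbsCx V) : Set (Finset V) :=
  {e | e ∈ K.faces ∧ e.card = 2 ∧ Set.ncard {s | s ∈ K.faces ∧ s.card = 3 ∧ e ⊆ s} = 1}

end AbsCx

open AbsCx

section DegreeAux

open AbsCx Finset

variable {V : Type*} [Fintype V] [DecidableEq V] {n : ℕ} {K : AbsCx V}

lemma sign_pm (oK : CoherentOrientation n K) {x : Fin (n+1) → V}
    (hx : oK.sign x ≠ 0) : oK.sign x = 1 ∨ oK.sign x = -1 := by
  by_cases hinj : Function.Injective x
  · by_cases hmem : Finset.image x Finset.univ ∈ K.faces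
    · exact oK.sign_unit x hinj hmem
    · exact absurd (oK.sign_zero x (Or.inr hmem)) hx
  · exact absurd (oK.sign_zero x (Or.inl hinj)) hx

lemma mem_fiber_of (oK : CoherentOrientation n K) {W : Type*} [DecidableEq W] {f : V → W}
    {x : Fin (n+1) → V} {y : Fin (n+1) → W}
    (hx : oK.sign x ≠ 0) (hfx : f ∘ x = y) (i : Fin (n+1)) :
    f (x i) = y i ∧ ({x i} : Finset V) ∈ K.faces := by
  refine ⟨congrFun hfx i, ?_⟩
  have hmem : Finset.image x Finset.univ ∈ K.faces := by
    by_contra h; exact hx (oK.sign_zero x (Or.inr h))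
  refine K.down_closed hmem ?_ (Finset.singleton_nonempty _)
  simp only [Finset.singleton_subset_iff, Finset.mem_image]
  exact ⟨i, Finset.mem_univ i, rfl⟩

open scoped Classical in
lemma keyA (oK : CoherentOrientation n K) {W : Type*} [DecidableEq W] (f : V → W)
    (y : Fin (n+1) → W) (h2 : algSum oK.sign f y = 2) :
    2 ≤ (Finset.univ.filter (fun i : Fin (n+1) =>
      2 ≤ (Finset.univ.filter (fun v : V =>
        f v = y i ∧ ({v} : Finset V) ∈ K.faces)).card)).card := by
  classical
  by_contra hcon
  push_neg at hcon
  have hcard1 : (Finset.univ.filter (fun i : Fin (n+1) =>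
      2 ≤ (Finset.univ.filter (fun v : V =>
        f v = y i ∧ ({v} : Finset V) ∈ K.faces)).card)).card ≤ 1 := by omega
  set S := Finset.univ.filter (fun x : Fin (n+1) → V => f ∘ x = y ∧ oK.sign x ≠ 0) with hS
  have hmemS : ∀ x ∈ S, f ∘ x = y ∧ oK.sign x ≠ 0 := fun x hx => (Finset.mem_filter.mp hx).2
  have hmemS' : ∀ x : Fin (n+1) → V, f ∘ x = y → oK.sign x ≠ 0 → x ∈ S := by
    intro x h1 h2; simp [hS, h1, h2]
  have hsum : algSum oK.sign f y = ∑ x ∈ S, oK.sign x := by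
    unfold algSum
    rw [hS, Finset.sum_filter]
    apply Finset.sum_congr rfl
    intro x _
    by_cases h1 : f ∘ x = y
    · by_cases hz : oK.sign x = 0 <;> simp [h1, hz]
    · simp [h1]
  have agree : ∀ x ∈ S, ∀ x' ∈ S, ∀ j : Fin (n+1),
      ¬ (2 ≤ (Finset.univ.filter (fun v : V =>
        f v = y j ∧ ({v} : Finset V) ∈ K.faces)).card) → x j = x' j := by
    intro x hx x' hx' j hj
    have h1 := mem_fiber_of oK (hmemS x hx).2 (hmemS x hx).1 j
    have h1' := mem_fiber_of oK (hmemS x' hx').2 (hmemS x' hx').1 j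
    have hxj : x j ∈ Finset.univ.filter (fun v : V =>
        f v = y j ∧ ({v} : Finset V) ∈ K.faces) := by
      simp only [Finset.mem_filter, Finset.mem_univ, true_and]; exact h1
    have hx'j : x' j ∈ Finset.univ.filter (fun v : V =>
        f v = y j ∧ ({v} : Finset V) ∈ K.faces) := by
      simp only [Finset.mem_filter, Finset.mem_univ, true_and]; exact h1'
    have hle : (Finset.univ.filter (fun v : V =>
        f v = y j ∧ ({v} : Finset V) ∈ K.faces)).card ≤ 1 := by omega
    exact Finset.card_le_one.mp hle _ hxj _ hx'j
  have opp : ∀ x ∈ S, ∀ x' ∈ S, x ≠ x' → oK.sign x' = - oK.sign x := by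
    intro x hx x' hx' hne
    obtain ⟨i, hi⟩ : ∃ i, x i ≠ x' i := by
      by_contra h; push_neg at h; exact hne (funext h)
    have hiF : i ∈ Finset.univ.filter (fun i : Fin (n+1) =>
        2 ≤ (Finset.univ.filter (fun v : V =>
          f v = y i ∧ ({v} : Finset V) ∈ K.faces)).card) := by
      simp only [Finset.mem_filter, Finset.mem_univ, true_and]
      by_contra h
      exact hi (agree x hx x' hx' i h)
    refine oK.coherent x x' ⟨i, hi, ?_⟩ (hmemS x hx).2 (hmemS x' hx').2
    intro j hji
    apply agree x hx x' hx' j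
    intro h
    have hjF : j ∈ Finset.univ.filter (fun i : Fin (n+1) =>
        2 ≤ (Finset.univ.filter (fun v : V =>
          f v = y i ∧ ({v} : Finset V) ∈ K.faces)).card) := by
      simp only [Finset.mem_filter, Finset.mem_univ, true_and]; exact h
    exact hji (Finset.card_le_one.mp hcard1 _ hjF _ hiF)
  rcases S.eq_empty_or_nonempty with hSe | ⟨x0, hx0⟩
  · rw [hsum, hSe] at h2; simp at h2
  · by_cases hone : ∀ x ∈ S, x = x0
    · have hSsing : S = {x0} := by
        apply Finset.eq_singleton_iff_unique_mem.mpr ⟨hx0, hone⟩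
      rw [hsum, hSsing, Finset.sum_singleton] at h2
      rcases sign_pm oK (hmemS x0 hx0).2 with h | h <;> omega
    · push_neg at hone
      obtain ⟨x1, hx1, hne⟩ := hone
      have e01 : oK.sign x1 = - oK.sign x0 := opp x0 hx0 x1 hx1 (Ne.symm hne)
      have hS2 : S = {x0, x1} := by
        apply Finset.Subset.antisymm
        · intro x hx
          simp only [Finset.mem_insert, Finset.mem_singleton]
          by_contra h
          push_neg at h
          obtain ⟨h0, h1⟩ := h
          have e0 : oK.sign x = - oK.sign x0 := opp x0 hx0 x hx (fun he => h0 he.symm)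
          have e1 : oK.sign x = - oK.sign x1 := opp x1 hx1 x hx (fun he => h1 he.symm)
          exact (hmemS x0 hx0).2 (by linarith)
        · intro x hx
          simp only [Finset.mem_insert, Finset.mem_singleton] at hx
          rcases hx with rfl | rfl <;> assumption
      rw [hsum, hS2, Finset.sum_pair hne.symm] at h2
      linarith

lemma exists_pos {m : ℕ} (oL : CoherentOrientation m (stdSphere m)) (hm : 1 ≤ m)
    (w : Fin (m+2)) :
    ∃ y : Fin (m+1) → Fin (m+2), Function.Injective y ∧
      Finset.image y Finset.univ = Finset.univ.erase w ∧ oL.sign y = 1 := by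
  classical
  have hcard : (Finset.univ.erase w).card = m + 1 := by
    rw [Finset.card_erase_of_mem (Finset.mem_univ w), Finset.card_univ, Fintype.card_fin]
    omega
  let e := (Finset.univ.erase w).orderIsoOfFin hcard
  set y0 : Fin (m+1) → Fin (m+2) := fun i => (e i : Fin (m+2)) with hy0
  have hinj : Function.Injective y0 := by
    intro a b h
    exact e.injective (Subtype.ext h)
  have himg : Finset.image y0 Finset.univ = Finset.univ.erase w := by
    apply Finset.eq_of_subset_of_card_le
    · intro z hz
      simp only [hy0, Finset.mem_image] at hz
      obtain ⟨i, _, rfl⟩ := hz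
      exact (e i).2
    · rw [Finset.card_image_of_injective _ hinj, Finset.card_univ, Fintype.card_fin, hcard]
  have hface : Finset.image y0 Finset.univ ∈ (stdSphere m).faces := by
    rw [himg]
    refine ⟨?_, ?_⟩
    · rw [← Finset.card_pos, hcard]; omega
    · intro h
      have hw := Finset.mem_univ w
      rw [← h] at hw
      exact (Finset.mem_erase.mp hw).1 rfl
  rcases oL.sign_unit y0 hinj hface with h1 | h1
  · exact ⟨y0, hinj, himg, h1⟩
  · have hne01 : (⟨0, by omega⟩ : Fin (m+1)) ≠ ⟨1, by omega⟩ :=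
      by intro h; have h2 := congrArg Fin.val h; simp at h2
    set σ : Equiv.Perm (Fin (m+1)) := Equiv.swap ⟨0, by omega⟩ ⟨1, by omega⟩ with hσ
    have hsσ : Equiv.Perm.sign σ = -1 := Equiv.Perm.sign_swap hne01
    refine ⟨y0 ∘ σ, hinj.comp σ.injective, ?_, ?_⟩
    · have h1' : Finset.image (⇑σ) Finset.univ = Finset.univ :=
        Finset.image_univ_equiv σ
      rw [← Finset.image_image, h1', himg]
    · rw [oL.sign_perm y0 σ, hsσ, h1]
      norm_num

lemma exists_pos0 (oL : CoherentOrientation 0 (stdSphere 0)) :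
    ∃ y : Fin 1 → Fin 2, oL.sign y = 1 := by
  classical
  haveI hss : Subsingleton (Fin (0+1)) := Fin.subsingleton_one
  have hinj : ∀ w : Fin 2, Function.Injective (fun _ : Fin 1 => w) :=
    fun w a b _ => Subsingleton.elim a b
  have hface : ∀ w : Fin 2,
      Finset.image (fun _ : Fin 1 => w) Finset.univ ∈ (stdSphere 0).faces := by
    intro w
    have himg : Finset.image (fun _ : Fin 1 => w) Finset.univ = {w} := by
      simp
    rw [himg]
    refine ⟨Finset.singleton_nonempty w, ?_⟩
    intro h
    have := congrArg Finset.card h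
    simp at this
  set y0 : Fin 1 → Fin 2 := fun _ => 0 with hy0
  set y1 : Fin 1 → Fin 2 := fun _ => 1 with hy1
  have h0 := oL.sign_unit y0 (hinj 0) (hface 0)
  have h1 := oL.sign_unit y1 (hinj 1) (hface 1)
  rcases h0 with h0 | h0
  · exact ⟨y0, h0⟩
  · refine ⟨y1, ?_⟩
    have hcoh : oL.sign y1 = - oL.sign y0 := by
      refine oL.coherent y0 y1 ⟨0, ?_, ?_⟩ (by omega) (by rcases h1 with h | h <;> omega)
      · simp [hy0, hy1]
      · intro j hj
        exact absurd (Subsingleton.elim j 0) hj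
    rw [hcoh, h0]; norm_num

end DegreeAux


/-- A triangulated `n`-sphere admitting a simplicial degree `2` map to `S^n_{n+2}`
has at least `n + 5` vertices. -/
theorem stmt12 {V : Type*} [Fintype V] [DecidableEq V] (n : ℕ) (K : AbsCx V)
    (hK : K.IsSphereTriangulation n)
    (oK : CoherentOrientation n K) (oL : CoherentOrientation n (stdSphere n))
    (f : V → Fin (n + 2)) (hf : K.IsSimplicialMap (stdSphere n) f)
    (hdeg : HasDegree oK oL f 2) :
    n + 5 ≤ K.vertexSet.ncard := by
  classical
  rcases Nat.eq_zero_or_pos n with hn0 | hn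
  · subst hn0
    obtain ⟨y, hy⟩ := exists_pos0 oL
    have hA := keyA oK f y (hdeg y hy)
    have hle : (2:ℕ) ≤ (Finset.univ : Finset (Fin 1)).card :=
      le_trans hA (Finset.card_filter_le _ _)
    simp at hle
  · -- c w : number of genuine vertices of K over w
    set c : Fin (n+2) → ℕ := fun w => (Finset.univ.filter (fun v : V =>
      f v = w ∧ ({v} : Finset V) ∈ K.faces)).card with hc
    set M : Finset (Fin (n+2)) := Finset.univ.filter (fun w => 2 ≤ c w) with hM
    have hApp : ∀ w : Fin (n+2), 2 ≤ (M.erase w).card := by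
      intro w
      obtain ⟨y, hyinj, hyimg, hysign⟩ := exists_pos oL hn w
      have hA := keyA oK f y (hdeg y hysign)
      refine le_trans hA (Finset.card_le_card_of_injOn y ?_ ?_)
      · intro i hi
        simp only [Finset.mem_filter, Finset.mem_univ, true_and, Finset.mem_coe] at hi ⊢
        refine Finset.mem_erase.mpr ⟨?_, ?_⟩
        · have hmem : y i ∈ Finset.univ.erase w := by
            rw [← hyimg]; exact Finset.mem_image_of_mem y (Finset.mem_univ i)
          exact (Finset.mem_erase.mp hmem).1
        · simp only [hM, Finset.mem_filter, Finset.mem_univ, true_and]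
          exact hi
      · exact fun a _ b _ h => hyinj h
    have hM3 : 3 ≤ M.card := by
      have h0 := hApp ⟨0, by omega⟩
      have hMne : M.Nonempty := by
        rcases M.eq_empty_or_nonempty with he | h
        · rw [he] at h0; simp at h0
        · exact h
      obtain ⟨w, hw⟩ := hMne
      have h1 := hApp w
      have h2 := Finset.card_erase_of_mem hw
      omega
    have hc1 : ∀ u : Fin (n+2), 1 ≤ c u := by
      intro u
      obtain ⟨w, hw⟩ := exists_ne u
      obtain ⟨y, hyinj, hyimg, hysign⟩ := exists_pos oL hn w
      have h2 := hdeg y hysign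
      have hex : ∃ x : Fin (n+1) → V, f ∘ x = y ∧ oK.sign x ≠ 0 := by
        by_contra h
        push_neg at h
        have hz : algSum oK.sign f y = 0 := by
          unfold algSum
          apply Finset.sum_eq_zero
          intro x _
          by_cases hfx : f ∘ x = y
          · simp [hfx, h x hfx]
          · simp [hfx]
        rw [hz] at h2
        exact absurd h2 (by norm_num)
      obtain ⟨x, hfx, hxs⟩ := hex
      have hu : u ∈ Finset.image y Finset.univ := by
        rw [hyimg]
        exact Finset.mem_erase.mpr ⟨fun h => hw h.symm, Finset.mem_univ u⟩
      obtain ⟨i, _, hi⟩ := Finset.mem_image.mp hu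
      have hfib := mem_fiber_of oK hxs hfx i
      have : x i ∈ Finset.univ.filter (fun v : V =>
          f v = u ∧ ({v} : Finset V) ∈ K.faces) := by
        simp only [Finset.mem_filter, Finset.mem_univ, true_and]
        exact ⟨hi ▸ hfib.1, hfib.2⟩
      have hpos := Finset.card_pos.mpr ⟨x i, this⟩
      simp only [hc]
      omega
    -- total count
    have hsum : ∑ w : Fin (n+2), c w =
        (Finset.univ.filter (fun v : V => ({v} : Finset V) ∈ K.faces)).card := by
      rw [Finset.card_eq_sum_card_fiberwise
        (f := f) (t := Finset.univ) (fun v _ => Finset.mem_univ (f v))]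
      apply Finset.sum_congr rfl
      intro w _
      simp only [hc]
      congr 1
      ext v
      simp only [Finset.mem_filter, Finset.mem_univ, true_and]
      tauto
    have hVs : K.vertexSet.ncard =
        (Finset.univ.filter (fun v : V => ({v} : Finset V) ∈ K.faces)).card := by
      have hset : K.vertexSet =
          ↑(Finset.univ.filter (fun v : V => ({v} : Finset V) ∈ K.faces)) := by
        ext v
        simp [AbsCx.vertexSet]
      rw [hset, Set.ncard_coe_finset]
    have hlb : n + 2 + M.card ≤ ∑ w : Fin (n+2), c w := by
      have hterm : ∀ w ∈ (Finset.univ : Finset (Fin (n+2))),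
          (if w ∈ M then 2 else 1) ≤ c w := by
        intro w _
        by_cases h : w ∈ M
        · simp only [h, if_true]
          rw [hM] at h
          exact (Finset.mem_filter.mp h).2
        · simp only [h, if_false]
          exact hc1 w
      have hcalc : ∑ w : Fin (n+2), (if w ∈ M then 2 else 1) = n + 2 + M.card := by
        have h1 : ∀ w : Fin (n+2), (if w ∈ M then 2 else 1 : ℕ) =
            1 + (if w ∈ M then 1 else 0) := by
          intro w; split <;> rfl
        simp_rw [h1]
        rw [Finset.sum_add_distrib, Finset.sum_const, Finset.card_univ, Fintype.card_fin,
          ← Finset.card_filter, Finset.filter_mem_eq_inter, Finset.univ_inter]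
        simp [mul_comm]
      calc n + 2 + M.card = ∑ w : Fin (n+2), (if w ∈ M then 2 else 1) := hcalc.symm
        _ ≤ ∑ w : Fin (n+2), c w := Finset.sum_le_sum hterm
    rw [hVs, ← hsum]
    omega
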